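/- (Upper bound part of the small-holdings theorem) Let α > 0, β > 0, y ≥ 0, z ≥ 2y, φ ≤ (z-2y)/α, t ∈ (0,1]. For any nonnegative integrable ζ on [0,t] with η_r = ∫₀ʳ ζ_v dv ≤ φ, it holds that ∫₀ᵗ ζ_r·exp(e^{-βr}z - e^{-2βr}y - αe^{-βr}η_r) dr ≤ (1 - e^{-αφ})·e^{z-y}/α. -/

import Mathlib

open Real MeasureTheory
open Set
open scoped ENNReal

lemma exp_primitive (α : ℝ) (x : ℝ) :
    ∫ s in (0:ℝ)..x, α * Real.exp (-α * s) = 1 - Real.exp (-α * x) := by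
  have hd : ∀ s : ℝ, HasDerivAt (fun u => -Real.exp (-α * u)) (α * Real.exp (-α * s)) s := by
    intro s
    have h1 : HasDerivAt (fun u : ℝ => -α * u) (-α) s := by
      simpa using (hasDerivAt_id s).const_mul (-α)
    have := (h1.exp).neg
    refine this.congr_deriv ?_
    ring
  rw [intervalIntegral.integral_eq_sub_of_hasDerivAt (fun s _ => hd s)
    ((Continuous.mul continuous_const ((continuous_const.mul continuous_id).rexp)).intervalIntegrable 0 x)]
  simp [mul_zero]
  ring

lemma exp_primitive2 (α T : ℝ) (hα : 0 < α) :
    ∫ s in (0:ℝ)..T, α * Real.exp (-α * s) * (T - s) = T - (1 - Real.exp (-α * T)) / α := by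
  have hd : ∀ s : ℝ, HasDerivAt (fun u => -(T - u) * Real.exp (-α * u) + Real.exp (-α * u) / α)
      (α * Real.exp (-α * s) * (T - s)) s := by
    intro s
    have h1 : HasDerivAt (fun u : ℝ => -α * u) (-α) s := by
      simpa using (hasDerivAt_id s).const_mul (-α)
    have he := h1.exp
    have h2 : HasDerivAt (fun u : ℝ => -(T - u)) (1 : ℝ) s := by
      exact ((hasDerivAt_id s).const_sub T).neg.congr_deriv (by simp)
    have := (h2.mul he).add (he.div_const α)
    refine this.congr_deriv ?_
    field_simp
    ring
  rw [intervalIntegral.integral_eq_sub_of_hasDerivAt (fun s _ => hd s)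
    (((continuous_const.mul ((continuous_const.mul continuous_id).rexp)).mul
      (continuous_const.sub continuous_id)).intervalIntegrable 0 T)]
  field_simp
  simp only [mul_zero, neg_zero, Real.exp_zero]
  ring

lemma key_bound (α t φ : ℝ) (hα : 0 < α) (h0t : 0 < t)
    (ζ : ℝ → ℝ) (hζpos : ∀ v, 0 ≤ ζ v)
    (hζint : IntegrableOn ζ (Set.Icc 0 t))
    (η : ℝ → ℝ) (hη : ∀ r, η r = ∫ v in (0 : ℝ)..r, ζ v)
    (hηφ : ∀ r ∈ Set.Icc 0 t, η r ≤ φ) :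
    ∫ r in Set.Ioc 0 t, ζ r * Real.exp (-α * η r) ≤ (1 - Real.exp (-α * φ)) / α := by
  -- basic facts about η
  have hIcc : Set.uIcc (0:ℝ) t = Set.Icc 0 t := Set.uIcc_of_le h0t.le
  have ηcont : ContinuousOn η (Set.Icc 0 t) := by
    have := intervalIntegral.continuousOn_primitive_interval (f := ζ) (a := 0) (b := t)
      (μ := volume) (by rwa [hIcc])
    rw [hIcc] at this
    exact this.congr fun r _ => hη r
  have η0 : η 0 = 0 := by rw [hη]; exact intervalIntegral.integral_same
  have hζsub : ∀ a b : ℝ, 0 ≤ a → b ≤ t → IntegrableOn ζ (Set.Ioc a b) := by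
    intro a b ha hb
    exact hζint.mono_set (fun x hx => ⟨le_trans ha hx.1.le, le_trans hx.2 hb⟩)
  have hii : ∀ b : ℝ, 0 ≤ b → b ≤ t → IntervalIntegrable ζ volume 0 b := by
    intro b hb0 hbt
    exact (intervalIntegrable_iff_integrableOn_Ioc_of_le hb0).mpr (hζsub 0 b le_rfl hbt)
  have ηd : ∀ a b : ℝ, 0 ≤ a → a ≤ b → b ≤ t → η b - η a = ∫ r in Set.Ioc a b, ζ r := by
    intro a b ha hab hb
    rw [hη, hη, ← intervalIntegral.integral_of_le hab,
      intervalIntegral.integral_interval_sub_left (hii b (le_trans ha hab) hb)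
        (hii a ha (le_trans hab hb))]
  have ηmono : ∀ a b : ℝ, 0 ≤ a → a ≤ b → b ≤ t → η a ≤ η b := by
    intro a b ha hab hb
    have := ηd a b ha hab hb
    have h2 : 0 ≤ ∫ r in Set.Ioc a b, ζ r :=
      setIntegral_nonneg measurableSet_Ioc fun r _ => hζpos r
    linarith
  have ηnn : ∀ r ∈ Set.Icc (0:ℝ) t, 0 ≤ η r := by
    intro r hr
    have := ηmono 0 r le_rfl hr.1 hr.2
    linarith [η0]
  have hT0 : 0 ≤ η t := ηnn t ⟨h0t.le, le_rfl⟩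
  have hTφ : η t ≤ φ := hηφ t ⟨h0t.le, le_rfl⟩
  have hφ0 : 0 ≤ φ := le_trans hT0 hTφ
  have hζR : IntegrableOn ζ (Set.Ioc 0 t) := hζsub 0 t le_rfl le_rfl
  -- continuity facts
  have contExp : ContinuousOn (fun r => Real.exp (-α * η r)) (Set.Icc 0 t) :=
    Real.continuous_exp.comp_continuousOn (continuousOn_const.mul ηcont)
  have intK : IntegrableOn (fun r => ζ r * (1 - Real.exp (-α * η r))) (Set.Ioc 0 t) :=
    (hζint.mul_continuousOn (continuousOn_const.sub contExp) isCompact_Icc).mono_set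
      Set.Ioc_subset_Icc_self
  -- the region below the graph of η
  set A' : Set (ℝ × ℝ) := (Set.Icc (0:ℝ) t ×ˢ (Set.univ : Set ℝ)) ∩
      ((fun p : ℝ × ℝ => p.2 - η p.1) ⁻¹' Set.Iic 0) with hA'def
  have hA'closed : IsClosed A' := by
    apply ContinuousOn.preimage_isClosed_of_isClosed _ (isClosed_Icc.prod isClosed_univ)
      isClosed_Iic
    exact continuous_snd.continuousOn.sub
      (ηcont.comp continuous_fst.continuousOn (fun p hp => hp.1))
  have hA'mem : ∀ r ∈ Set.Icc (0:ℝ) t, ∀ s : ℝ, ((r, s) ∈ A' ↔ s ≤ η r) := by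
    intro r hr s
    simp [hA'def, hr, sub_nonpos]
  -- measurable representative of ζ
  set ζ' : ℝ → ℝ := hζR.aestronglyMeasurable.mk ζ with hζ'def
  have hζ'meas : StronglyMeasurable ζ' := hζR.aestronglyMeasurable.stronglyMeasurable_mk
  have hζζ' : ζ =ᵐ[volume.restrict (Set.Ioc 0 t)] ζ' := hζR.aestronglyMeasurable.ae_eq_mk
  set f : ℝ × ℝ → ℝ≥0∞ := fun p => ENNReal.ofReal (ζ' p.1) *
      A'.indicator (fun q => ENNReal.ofReal (α * Real.exp (-α * q.2))) p with hfdef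
  have hgm : Measurable fun q : ℝ × ℝ => ENNReal.ofReal (α * Real.exp (-α * q.2)) :=
    (ENNReal.continuous_ofReal.comp
      (continuous_const.mul ((continuous_const.mul continuous_snd).rexp))).measurable
  have hfm : Measurable f :=
    ((hζ'meas.measurable.comp measurable_fst).ennreal_ofReal).mul
      (hgm.indicator hA'closed.measurableSet)
  have hinner : ∀ r ∈ Set.Ioc (0:ℝ) t, (∫⁻ s in Set.Ioc 0 φ, f (r, s)) =
      ENNReal.ofReal (ζ' r) * ENNReal.ofReal (1 - Real.exp (-α * η r)) := by
    intro r hr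
    have hr' : r ∈ Set.Icc (0:ℝ) t := ⟨hr.1.le, hr.2⟩
    have h1 : ∀ s : ℝ, f (r, s) = ENNReal.ofReal (ζ' r) *
        (Set.Iic (η r)).indicator (fun s => ENNReal.ofReal (α * Real.exp (-α * s))) s := by
      intro s
      by_cases h : s ≤ η r
      · rw [hfdef]
        simp only [Set.indicator_of_mem ((hA'mem r hr' s).mpr h),
          Set.indicator_of_mem (Set.mem_Iic.mpr h)]
      · rw [hfdef]
        simp only [Set.indicator_of_notMem (fun hc => h ((hA'mem r hr' s).mp hc)),
          Set.indicator_of_notMem (fun hc => h (Set.mem_Iic.mp hc))]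
    simp_rw [h1]
    have hgm1 : Measurable fun s : ℝ => ENNReal.ofReal (α * Real.exp (-α * s)) :=
      (ENNReal.continuous_ofReal.comp
        (continuous_const.mul ((continuous_const.mul continuous_id).rexp))).measurable
    rw [lintegral_const_mul _ (hgm1.indicator measurableSet_Iic)]
    congr 1
    rw [lintegral_indicator measurableSet_Iic _, Measure.restrict_restrict measurableSet_Iic]
    have hset : Set.Iic (η r) ∩ Set.Ioc 0 φ = Set.Ioc 0 (η r) := by
      ext s
      constructor
      · rintro ⟨h1', h2', _⟩; exact ⟨h2', h1'⟩
      · rintro ⟨h2', h1'⟩; exact ⟨h1', h2', le_trans h1' (hηφ r hr')⟩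
    rw [hset, ← ofReal_integral_eq_lintegral_ofReal (f := fun s => α * Real.exp (-α * s))
      ((by fun_prop : Continuous fun s : ℝ => α * Real.exp (-α * s)).integrableOn_Ioc)
      (Filter.Eventually.of_forall fun s => by positivity)]
    rw [← intervalIntegral.integral_of_le (ηnn r hr'), exp_primitive]
  -- nonnegativity of K
  have hKnn : 0 ≤ ∫ r in Set.Ioc 0 t, ζ r * (1 - Real.exp (-α * η r)) := by
    apply setIntegral_nonneg measurableSet_Ioc
    intro r hr
    have h2 : Real.exp (-α * η r) ≤ 1 := by
      rw [Real.exp_le_one_iff]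
      have := ηnn r ⟨hr.1.le, hr.2⟩
      nlinarith
    exact mul_nonneg (hζpos r) (by linarith)
  -- step C : lower bound for K via Tonelli
  have hC : ENNReal.ofReal (η t - (1 - Real.exp (-α * η t)) / α) ≤
      ENNReal.ofReal (∫ r in Set.Ioc 0 t, ζ r * (1 - Real.exp (-α * η r))) := by
    have hKeq : ENNReal.ofReal (∫ r in Set.Ioc 0 t, ζ r * (1 - Real.exp (-α * η r))) =
        ∫⁻ s in Set.Ioc 0 φ, ∫⁻ r in Set.Ioc 0 t, f (r, s) := by
      rw [ofReal_integral_eq_lintegral_ofReal intK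
        ((ae_restrict_mem measurableSet_Ioc).mono (fun r hr => by
          have h2 : Real.exp (-α * η r) ≤ 1 := by
            rw [Real.exp_le_one_iff]
            have := ηnn r ⟨hr.1.le, hr.2⟩
            nlinarith
          exact mul_nonneg (hζpos r) (by linarith)))]
      have h2 : (∫⁻ r in Set.Ioc 0 t, ENNReal.ofReal (ζ r * (1 - Real.exp (-α * η r)))) =
          ∫⁻ r in Set.Ioc 0 t, ∫⁻ s in Set.Ioc 0 φ, f (r, s) := by
        apply lintegral_congr_ae
        filter_upwards [hζζ', ae_restrict_mem measurableSet_Ioc] with r h1 h2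
        rw [hinner r h2, ← h1, ← ENNReal.ofReal_mul (hζpos r)]
      rw [h2, lintegral_lintegral_swap hfm.aemeasurable]
    rw [hKeq]
    calc ENNReal.ofReal (η t - (1 - Real.exp (-α * η t)) / α)
        = ∫⁻ s in Set.Ioc 0 (η t), ENNReal.ofReal (α * Real.exp (-α * s) * (η t - s)) := by
          rw [← ofReal_integral_eq_lintegral_ofReal
            (f := fun s => α * Real.exp (-α * s) * (η t - s))
            ((by fun_prop : Continuous fun s : ℝ =>
              α * Real.exp (-α * s) * (η t - s)).integrableOn_Ioc)
            ((ae_restrict_mem measurableSet_Ioc).mono (fun s hs => by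
              have h1 : 0 < Real.exp (-α * s) := Real.exp_pos _
              have h2 : s ≤ η t := hs.2
              show (0:ℝ) ≤ α * Real.exp (-α * s) * (η t - s)
              exact mul_nonneg (by positivity) (by linarith)))]
          rw [← intervalIntegral.integral_of_le hT0, exp_primitive2 α (η t) hα]
      _ ≤ ∫⁻ s in Set.Ioc 0 (η t), ∫⁻ r in Set.Ioc 0 t, f (r, s) := by
          apply lintegral_mono_ae
          filter_upwards [ae_restrict_mem measurableSet_Ioc] with s hs
          obtain ⟨u, hu, hus⟩ : ∃ u ∈ Set.Icc (0:ℝ) t, η u = s := by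
            have hmem : s ∈ Set.Icc (η 0) (η t) := ⟨by rw [η0]; exact hs.1.le, hs.2⟩
            exact intermediate_value_Icc h0t.le ηcont hmem
          have hsub : Set.Ioc u t ⊆ Set.Ioc 0 t := Set.Ioc_subset_Ioc_left hu.1
          calc ENNReal.ofReal (α * Real.exp (-α * s) * (η t - s))
              = ENNReal.ofReal (α * Real.exp (-α * s)) * ENNReal.ofReal (η t - s) :=
                ENNReal.ofReal_mul (by positivity)
            _ = ENNReal.ofReal (α * Real.exp (-α * s)) *
                  ∫⁻ r in Set.Ioc u t, ENNReal.ofReal (ζ r) := by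
                congr 1
                rw [← ofReal_integral_eq_lintegral_ofReal (hζsub u t hu.1 le_rfl)
                  (Filter.Eventually.of_forall fun r => hζpos r)]
                congr 1
                rw [← ηd u t hu.1 hu.2 le_rfl, hus]
            _ = ∫⁻ r in Set.Ioc u t,
                  ENNReal.ofReal (ζ r) * ENNReal.ofReal (α * Real.exp (-α * s)) := by
                rw [lintegral_mul_const'' _
                  ((hζsub u t hu.1 le_rfl).aestronglyMeasurable.aemeasurable.ennreal_ofReal),
                  mul_comm]
            _ = ∫⁻ r in Set.Ioc u t, f (r, s) := by
                apply lintegral_congr_ae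
                filter_upwards [ae_restrict_of_ae_restrict_of_subset hsub hζζ',
                  ae_restrict_mem measurableSet_Ioc] with r h1 h2
                have hrIcc : r ∈ Set.Icc (0:ℝ) t := ⟨le_trans hu.1 h2.1.le, h2.2⟩
                have hsr : s ≤ η r := by rw [← hus]; exact ηmono u r hu.1 h2.1.le h2.2
                rw [hfdef]
                simp only [Set.indicator_of_mem ((hA'mem r hrIcc s).mpr hsr)]
                rw [h1]
            _ ≤ ∫⁻ r in Set.Ioc 0 t, f (r, s) := lintegral_mono_set hsub
      _ ≤ ∫⁻ s in Set.Ioc 0 φ, ∫⁻ r in Set.Ioc 0 t, f (r, s) :=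
          lintegral_mono_set (Set.Ioc_subset_Ioc_right hTφ)
  have hK : η t - (1 - Real.exp (-α * η t)) / α ≤
      ∫ r in Set.Ioc 0 t, ζ r * (1 - Real.exp (-α * η r)) :=
    (ENNReal.ofReal_le_ofReal_iff hKnn).mp hC
  -- conclusion
  calc ∫ r in Set.Ioc 0 t, ζ r * Real.exp (-α * η r)
      = (∫ r in Set.Ioc 0 t, ζ r) -
          ∫ r in Set.Ioc 0 t, ζ r * (1 - Real.exp (-α * η r)) := by
        rw [← integral_sub hζR intK]
        exact integral_congr_ae (Filter.Eventually.of_forall fun r => by ring)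
    _ = η t - ∫ r in Set.Ioc 0 t, ζ r * (1 - Real.exp (-α * η r)) := by
        have h3 := ηd 0 t le_rfl h0t.le le_rfl
        rw [η0] at h3
        rw [← h3]
        ring
    _ ≤ η t - (η t - (1 - Real.exp (-α * η t)) / α) := by linarith
    _ = (1 - Real.exp (-α * η t)) / α := by ring
    _ ≤ (1 - Real.exp (-α * φ)) / α := by
        apply (div_le_div_iff_of_pos_right hα).mpr
        have := Real.exp_le_exp.mpr (show -α * φ ≤ -α * η t by nlinarith)
        linarith


theorem small_holdings_upper_bound (α β y z t φ : ℝ) (hα : 0 < α) (hβ : 0 < β)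
    (hy : 0 ≤ y) (hz : 2 * y ≤ z) (ht : t ∈ Set.Ioc (0 : ℝ) 1)
    (hφ : α * φ ≤ z - 2 * y)
    (ζ : ℝ → ℝ) (hζpos : ∀ v, 0 ≤ ζ v)
    (hζint : IntegrableOn ζ (Set.Icc 0 t))
    (η : ℝ → ℝ) (hη : ∀ r, η r = ∫ v in (0 : ℝ)..r, ζ v)
    (hηφ : ∀ r ∈ Set.Icc 0 t, η r ≤ φ) :
    (∫ r in (0 : ℝ)..t,
        ζ r * Real.exp (Real.exp (-β * r) * z - Real.exp (-2 * β * r) * y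
          - α * Real.exp (-β * r) * η r))
      ≤ (1 - Real.exp (-α * φ)) * Real.exp (z - y) / α := by
  obtain ⟨h0t, _⟩ := ht
  have hIcc : Set.uIcc (0:ℝ) t = Set.Icc 0 t := Set.uIcc_of_le h0t.le
  have ηcont : ContinuousOn η (Set.Icc 0 t) := by
    have := intervalIntegral.continuousOn_primitive_interval (f := ζ) (a := 0) (b := t)
      (μ := volume) (by rwa [hIcc])
    rw [hIcc] at this
    exact this.congr fun r _ => hη r
  have η0 : η 0 = 0 := by rw [hη]; exact intervalIntegral.integral_same
  have hζsub : ∀ a b : ℝ, 0 ≤ a → b ≤ t → IntegrableOn ζ (Set.Ioc a b) := by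
    intro a b ha hb
    exact hζint.mono_set (fun x hx => ⟨le_trans ha hx.1.le, le_trans hx.2 hb⟩)
  have hii : ∀ b : ℝ, 0 ≤ b → b ≤ t → IntervalIntegrable ζ volume 0 b := by
    intro b hb0 hbt
    exact (intervalIntegrable_iff_integrableOn_Ioc_of_le hb0).mpr (hζsub 0 b le_rfl hbt)
  have ηd : ∀ a b : ℝ, 0 ≤ a → a ≤ b → b ≤ t → η b - η a = ∫ r in Set.Ioc a b, ζ r := by
    intro a b ha hab hb
    rw [hη, hη, ← intervalIntegral.integral_of_le hab,
      intervalIntegral.integral_interval_sub_left (hii b (le_trans ha hab) hb)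
        (hii a ha (le_trans hab hb))]
  have ηnn : ∀ r ∈ Set.Icc (0:ℝ) t, 0 ≤ η r := by
    intro r hr
    have h1 := ηd 0 r le_rfl hr.1 hr.2
    have h2 : 0 ≤ ∫ v in Set.Ioc 0 r, ζ v :=
      setIntegral_nonneg measurableSet_Ioc fun v _ => hζpos v
    rw [η0] at h1
    linarith
  -- pointwise bound
  have hpt : ∀ r ∈ Set.Icc (0:ℝ) t,
      ζ r * Real.exp (Real.exp (-β * r) * z - Real.exp (-2 * β * r) * y
        - α * Real.exp (-β * r) * η r)
      ≤ Real.exp (z - y) * (ζ r * Real.exp (-α * η r)) := by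
    intro r hr
    have he0 : 0 < Real.exp (-β * r) := Real.exp_pos _
    have he1 : Real.exp (-β * r) ≤ 1 := Real.exp_le_one_iff.mpr (by nlinarith [hr.1])
    have he2 : Real.exp (-2 * β * r) = Real.exp (-β * r) * Real.exp (-β * r) := by
      rw [← Real.exp_add]; ring_nf
    have hηr0 : 0 ≤ η r := ηnn r hr
    have hηrφ : η r ≤ φ := hηφ r hr
    have hexp : Real.exp (-β * r) * z - Real.exp (-2 * β * r) * y
        - α * Real.exp (-β * r) * η r ≤ (z - y) + -(α * η r) := by
      set e := Real.exp (-β * r) with hedef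
      rw [he2]
      have hαη : α * η r ≤ α * φ := by nlinarith
      have hkey : (0:ℝ) ≤ (1 - e) * (z - (1 + e) * y - α * η r) := by
        apply mul_nonneg (by linarith)
        nlinarith [mul_nonneg (sub_nonneg.mpr he1) hy]
      nlinarith [hkey]
    calc ζ r * Real.exp (Real.exp (-β * r) * z - Real.exp (-2 * β * r) * y
          - α * Real.exp (-β * r) * η r)
        ≤ ζ r * Real.exp ((z - y) + -(α * η r)) :=
          mul_le_mul_of_nonneg_left (Real.exp_le_exp.mpr hexp) (hζpos r)
      _ = Real.exp (z - y) * (ζ r * Real.exp (-α * η r)) := by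
          rw [Real.exp_add]; ring_nf
  -- continuity / integrability
  have contR : ContinuousOn (fun r => Real.exp (-α * η r)) (Set.Icc 0 t) :=
    Real.continuous_exp.comp_continuousOn (continuousOn_const.mul ηcont)
  have contL : ContinuousOn (fun r => Real.exp (Real.exp (-β * r) * z
      - Real.exp (-2 * β * r) * y - α * Real.exp (-β * r) * η r)) (Set.Icc 0 t) := by
    apply Real.continuous_exp.comp_continuousOn
    apply ContinuousOn.sub
    · exact (Continuous.continuousOn (by fun_prop))
    · exact (continuous_const.mul ((continuous_const.mul continuous_id).rexp)).continuousOn.mul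
        ηcont
  have intL : IntegrableOn (fun r => ζ r * Real.exp (Real.exp (-β * r) * z
      - Real.exp (-2 * β * r) * y - α * Real.exp (-β * r) * η r)) (Set.Icc 0 t) :=
    hζint.mul_continuousOn contL isCompact_Icc
  have intR : IntegrableOn (fun r => ζ r * Real.exp (-α * η r)) (Set.Icc 0 t) :=
    hζint.mul_continuousOn contR isCompact_Icc
  have intRR : IntegrableOn (fun r => Real.exp (z - y) * (ζ r * Real.exp (-α * η r)))
      (Set.Icc 0 t) := intR.const_mul _
  rw [intervalIntegral.integral_of_le h0t.le]
  calc (∫ r in Set.Ioc 0 t, ζ r * Real.exp (Real.exp (-β * r) * z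
          - Real.exp (-2 * β * r) * y - α * Real.exp (-β * r) * η r))
      ≤ ∫ r in Set.Ioc 0 t, Real.exp (z - y) * (ζ r * Real.exp (-α * η r)) :=
        setIntegral_mono_on (intL.mono_set Set.Ioc_subset_Icc_self)
          (intRR.mono_set Set.Ioc_subset_Icc_self) measurableSet_Ioc
          (fun r hr => hpt r (Set.Ioc_subset_Icc_self hr))
    _ = Real.exp (z - y) * ∫ r in Set.Ioc 0 t, ζ r * Real.exp (-α * η r) := by
        rw [MeasureTheory.integral_const_mul]
    _ ≤ Real.exp (z - y) * ((1 - Real.exp (-α * φ)) / α) := by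
        apply mul_le_mul_of_nonneg_left _ (Real.exp_pos _).le
        exact key_bound α t φ hα h0t ζ hζpos hζint η hη hηφ
    _ = (1 - Real.exp (-α * φ)) * Real.exp (z - y) / α := by ring
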